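/- Let M < −1, σ ∈ ℝⁿ, and ρ̃ ∈ ℝ. Then ∫_{|σ| ≤ |ρ| ≤ (1/2)|ρ̃|} ⟨ρ⟩ · ⟨σ, ρ⟩^{M−1} dρ ≲ ⟨σ⟩^{M+1}, with implied constant depending only on M. -/
import Mathlib

open MeasureTheory

theorem middle_range_integral_estimate (n : ℕ) (M : ℝ) (hM : M < -1) :
    ∃ C > 0, ∀ (σ : EuclideanSpace ℝ (Fin n)) (ρt : ℝ),
      ∫ ρ in {ρ : ℝ | ‖σ‖ ≤ |ρ| ∧ |ρ| ≤ (1/2) * |ρt|},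
          Real.sqrt (1 + ρ^2) * (Real.sqrt (1 + ‖σ‖^2 + ρ^2)) ^ (M - 1)
        ≤ C * (Real.sqrt (1 + ‖σ‖^2)) ^ (M + 1) := by
  -- the model integrable function
  have hint : Integrable (fun t : ℝ => ((1 : ℝ) + t ^ 2) ^ (M / 2)) := by
    have h1 : (Module.finrank ℝ ℝ : ℝ) < -M := by
      simp only [Module.finrank_self, Nat.cast_one]; linarith
    have := integrable_rpow_neg_one_add_norm_sq (E := ℝ) (μ := volume) h1
    simpa [Real.norm_eq_abs, sq_abs, neg_div, neg_neg] using this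
  set C0 : ℝ := ∫ t : ℝ, ((1 : ℝ) + t ^ 2) ^ (M / 2) with hC0def
  have hC0 : 0 ≤ C0 := integral_nonneg fun t => Real.rpow_nonneg (by positivity) _
  refine ⟨C0 + 1, by linarith, fun σ ρt => ?_⟩
  set s : ℝ := ‖σ‖ with hs
  have hs0 : 0 ≤ s := norm_nonneg _
  set a : ℝ := Real.sqrt (1 + s ^ 2) with ha
  have ha0 : 0 < a := Real.sqrt_pos.2 (by positivity)
  have ha2 : a ^ 2 = 1 + s ^ 2 := Real.sq_sqrt (by positivity)
  -- the dominating function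
  set g : ℝ → ℝ := fun ρ => Real.sqrt (1 + s ^ 2 + ρ ^ 2) ^ M with hg
  have hgval : ∀ ρ : ℝ, g ρ = a ^ M * ((1 : ℝ) + (ρ / a) ^ 2) ^ (M / 2) := by
    intro ρ
    have hbase : (0 : ℝ) ≤ 1 + s ^ 2 + ρ ^ 2 := by positivity
    have h1 : (1 : ℝ) + s ^ 2 + ρ ^ 2 = a ^ 2 * (1 + (ρ / a) ^ 2) := by
      field_simp
      rw [ha2]
    have h2 : Real.sqrt (1 + s ^ 2 + ρ ^ 2) ^ M = ((1 : ℝ) + s ^ 2 + ρ ^ 2) ^ (M / 2) := by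
      rw [Real.sqrt_eq_rpow, ← Real.rpow_mul hbase]
      congr 1
      ring
    show Real.sqrt (1 + s ^ 2 + ρ ^ 2) ^ M = _
    rw [h2, h1, Real.mul_rpow (by positivity) (by positivity)]
    congr 1
    rw [← Real.rpow_natCast a 2, ← Real.rpow_mul ha0.le]
    congr 1
    push_cast
    ring
  have hgint : Integrable g := by
    have : Integrable (fun ρ : ℝ => ((1 : ℝ) + (ρ / a) ^ 2) ^ (M / 2)) :=
      hint.comp_div ha0.ne'
    have := this.const_mul (a ^ M)
    exact this.congr (Filter.Eventually.of_forall fun ρ => (hgval ρ).symm)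
  have hgnonneg : ∀ ρ, 0 ≤ g ρ := fun ρ => Real.rpow_nonneg (Real.sqrt_nonneg _) _
  -- pointwise bound
  set f : ℝ → ℝ := fun ρ => Real.sqrt (1 + ρ ^ 2) * Real.sqrt (1 + s ^ 2 + ρ ^ 2) ^ (M - 1)
    with hf
  have hfnonneg : ∀ ρ, 0 ≤ f ρ :=
    fun ρ => mul_nonneg (Real.sqrt_nonneg _) (Real.rpow_nonneg (Real.sqrt_nonneg _) _)
  have hfg : ∀ ρ, f ρ ≤ g ρ := by
    intro ρ
    have hb : (0 : ℝ) < Real.sqrt (1 + s ^ 2 + ρ ^ 2) := Real.sqrt_pos.2 (by positivity)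
    have h1 : Real.sqrt (1 + ρ ^ 2) ≤ Real.sqrt (1 + s ^ 2 + ρ ^ 2) :=
      Real.sqrt_le_sqrt (by nlinarith)
    calc f ρ ≤ Real.sqrt (1 + s ^ 2 + ρ ^ 2) * Real.sqrt (1 + s ^ 2 + ρ ^ 2) ^ (M - 1) :=
          mul_le_mul_of_nonneg_right h1 (Real.rpow_nonneg (Real.sqrt_nonneg _) _)
      _ = g ρ := by
          show _ = Real.sqrt (1 + s ^ 2 + ρ ^ 2) ^ M
          rw [show M - 1 = M + (-1) by ring, Real.rpow_add hb, Real.rpow_neg_one]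
          field_simp
  have hfmeas : AEStronglyMeasurable f volume := by
    apply Continuous.aestronglyMeasurable
    apply Continuous.mul
    · exact (continuous_const.add (continuous_pow 2)).sqrt
    · apply Continuous.rpow_const
      · exact (continuous_const.add (continuous_pow 2)).sqrt
      · intro x
        left
        exact (Real.sqrt_pos.2 (by positivity)).ne'
  have hfint : Integrable f := by
    refine hgint.mono' hfmeas (Filter.Eventually.of_forall fun ρ => ?_)
    rw [Real.norm_eq_abs, abs_of_nonneg (hfnonneg ρ)]
    exact hfg ρ
  -- chain of inequalities
  have h1 : ∫ ρ in {ρ : ℝ | ‖σ‖ ≤ |ρ| ∧ |ρ| ≤ (1/2) * |ρt|}, f ρ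
      ≤ ∫ ρ in {ρ : ℝ | ‖σ‖ ≤ |ρ| ∧ |ρ| ≤ (1/2) * |ρt|}, g ρ :=
    integral_mono hfint.integrableOn hgint.integrableOn hfg
  have h2 : ∫ ρ in {ρ : ℝ | ‖σ‖ ≤ |ρ| ∧ |ρ| ≤ (1/2) * |ρt|}, g ρ ≤ ∫ ρ, g ρ :=
    setIntegral_le_integral hgint (Filter.Eventually.of_forall hgnonneg)
  have h3 : ∫ ρ, g ρ = a ^ (M + 1) * C0 := by
    have : ∫ ρ, g ρ = a ^ M * ∫ ρ : ℝ, ((1 : ℝ) + (ρ / a) ^ 2) ^ (M / 2) := by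
      simp_rw [hgval]
      exact integral_const_mul _ _
    rw [this, MeasureTheory.Measure.integral_comp_div
      (fun t : ℝ => ((1 : ℝ) + t ^ 2) ^ (M / 2)) a]
    rw [smul_eq_mul, abs_of_pos ha0, ← hC0def, Real.rpow_add_one ha0.ne']
    ring
  have hfinal : a ^ (M + 1) * C0 ≤ (C0 + 1) * a ^ (M + 1) := by
    have : (0 : ℝ) ≤ a ^ (M + 1) := Real.rpow_nonneg ha0.le _
    nlinarith
  calc ∫ ρ in {ρ : ℝ | ‖σ‖ ≤ |ρ| ∧ |ρ| ≤ (1/2) * |ρt|}, f ρ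
      ≤ ∫ ρ, g ρ := h1.trans h2
    _ = a ^ (M + 1) * C0 := h3
    _ ≤ (C0 + 1) * a ^ (M + 1) := hfinal
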